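/- Every strongly summable ultrafilter is additively isomorphic to one with disjoint binary support: if p is a strongly summable ultrafilter on ℕ, then there is a sequence x with sufficient growth and FS(x) ∈ p such that for any map φ : ℕ → ℕ satisfying φ(∑_{i∈F} x_i) = ∑_{i∈F} 2^i for every nonempty finite F ⊆ ℕ, the pushforward ultrafilter p' = φ(p) is a strongly summable ultrafilter with disjoint binary support. -/

import Mathlib

/-- `FS(x)`: the set of all finite sums `∑_{i∈s} x i` over nonempty finite `s ⊆ ℕ`. -/
def FS (x : ℕ → ℕ) : Set ℕ := {n | ∃ s : Finset ℕ, s.Nonempty ∧ ∑ i ∈ s, x i = n}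

/-- `x` has sufficient growth: `x n > 4·∑_{i<n} x i` for every `n`. -/
def SufficientGrowth (x : ℕ → ℕ) : Prop :=
  ∀ n, 4 * ∑ i ∈ Finset.range n, x i < x n

/-- `p` is strongly summable. -/
def StronglySummable (p : Ultrafilter ℕ) : Prop :=
  ∀ A ∈ p, ∃ x : ℕ → ℕ, (∀ n, 0 < x n) ∧ FS x ⊆ A ∧ FS x ∈ p

/-- The binary support of `n`. -/
def bsupp (n : ℕ) : Set ℕ := {i | (n / 2 ^ i) % 2 = 1}

/-- A sequence `x` has disjoint binary support. -/
def DisjointBinarySupport (x : ℕ → ℕ) : Prop :=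
  ∀ i j, i ≠ j → Disjoint (bsupp (x i)) (bsupp (x j))

/-- An ultrafilter has disjoint binary support. -/
def HasDisjointBinarySupport (p : Ultrafilter ℕ) : Prop :=
  ∃ x : ℕ → ℕ, (∀ n, 0 < x n) ∧ SufficientGrowth x ∧
    DisjointBinarySupport x ∧ FS x ∈ p

/-- dyadic log class mod 5 -/
def Lcl (r : ℕ) : Set ℕ := {n | 0 < n ∧ Nat.log 2 n % 5 = r}

lemma mem_FS_single (x : ℕ → ℕ) (n : ℕ) : x n ∈ FS x :=
  ⟨{n}, Finset.singleton_nonempty n, Finset.sum_singleton _ _⟩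

lemma mem_FS_pair (x : ℕ → ℕ) {i j : ℕ} (h : i ≠ j) : x i + x j ∈ FS x :=
  ⟨{i, j}, ⟨i, by simp⟩, Finset.sum_pair h⟩

/-- key uniqueness/disjointness lemma for sufficient-growth sequences -/
lemma key_lemma (x : ℕ → ℕ) (hx : SufficientGrowth x) :
    ∀ N (F G K : Finset ℕ), F ⊆ Finset.range N → G ⊆ Finset.range N → K ⊆ Finset.range N →
    ((∑ i ∈ F, x i) + ∑ i ∈ G, x i = ∑ i ∈ K, x i) → K = F ∪ G ∧ Disjoint F G := by
  classical
  intro N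
  induction N with
  | zero =>
    intro F G K hF hG hK h
    simp only [Finset.range_zero, Finset.subset_empty] at hF hG hK
    subst hF; subst hG; subst hK; simp
  | succ N ih =>
    intro F G K hF hG hK h
    have hbound : ∀ S : Finset ℕ, S ⊆ Finset.range N → ∑ i ∈ S, x i ≤ ∑ i ∈ Finset.range N, x i :=
      fun S hS => Finset.sum_le_sum_of_subset hS
    have hgN := hx N
    have hsub : ∀ S : Finset ℕ, S ⊆ Finset.range (N+1) → N ∉ S → S ⊆ Finset.range N := by
      intro S hS hN a ha
      have := hS ha
      simp only [Finset.mem_range] at this ⊢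
      rcases Nat.lt_succ_iff_lt_or_eq.mp this with h'|h'
      · exact h'
      · exact absurd (h' ▸ ha) hN
    by_cases hKN : N ∈ K
    · by_cases hFN : N ∈ F
      · by_cases hGN : N ∈ G
        · exfalso
          have h1 : x N + ∑ i ∈ F.erase N, x i = ∑ i ∈ F, x i := Finset.add_sum_erase _ _ hFN
          have h2 : x N + ∑ i ∈ G.erase N, x i = ∑ i ∈ G, x i := Finset.add_sum_erase _ _ hGN
          have h3 : x N + ∑ i ∈ K.erase N, x i = ∑ i ∈ K, x i := Finset.add_sum_erase _ _ hKN
          have hK' : ∑ i ∈ K.erase N, x i ≤ ∑ i ∈ Finset.range N, x i :=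
            hbound _ (hsub _ ((Finset.erase_subset _ _).trans hK) (Finset.notMem_erase _ _))
          omega
        · have h1 : x N + ∑ i ∈ F.erase N, x i = ∑ i ∈ F, x i := Finset.add_sum_erase _ _ hFN
          have h3 : x N + ∑ i ∈ K.erase N, x i = ∑ i ∈ K, x i := Finset.add_sum_erase _ _ hKN
          have heq : (∑ i ∈ F.erase N, x i) + ∑ i ∈ G, x i = ∑ i ∈ K.erase N, x i := by omega
          obtain ⟨hKe, hdisj⟩ := ih (F.erase N) G (K.erase N)
            (hsub _ ((Finset.erase_subset _ _).trans hF) (Finset.notMem_erase _ _))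
            (hsub _ hG hGN)
            (hsub _ ((Finset.erase_subset _ _).trans hK) (Finset.notMem_erase _ _)) heq
          constructor
          · have hKi : K = insert N (K.erase N) := (Finset.insert_erase hKN).symm
            rw [hKi, hKe, ← Finset.insert_union, Finset.insert_erase hFN]
          · rw [← Finset.insert_erase hFN]
            exact Finset.disjoint_insert_left.mpr ⟨hGN, hdisj⟩
      · by_cases hGN : N ∈ G
        · have h2 : x N + ∑ i ∈ G.erase N, x i = ∑ i ∈ G, x i := Finset.add_sum_erase _ _ hGN
          have h3 : x N + ∑ i ∈ K.erase N, x i = ∑ i ∈ K, x i := Finset.add_sum_erase _ _ hKN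
          have heq : (∑ i ∈ F, x i) + ∑ i ∈ G.erase N, x i = ∑ i ∈ K.erase N, x i := by omega
          obtain ⟨hKe, hdisj⟩ := ih F (G.erase N) (K.erase N)
            (hsub _ hF hFN)
            (hsub _ ((Finset.erase_subset _ _).trans hG) (Finset.notMem_erase _ _))
            (hsub _ ((Finset.erase_subset _ _).trans hK) (Finset.notMem_erase _ _)) heq
          constructor
          · have hKi : K = insert N (K.erase N) := (Finset.insert_erase hKN).symm
            rw [hKi, hKe, Finset.union_comm, ← Finset.insert_union, Finset.insert_erase hGN,
              Finset.union_comm]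
          · rw [← Finset.insert_erase hGN]
            exact Finset.disjoint_insert_right.mpr ⟨hFN, hdisj⟩
        · exfalso
          have hxN : x N ≤ ∑ i ∈ K, x i := Finset.single_le_sum (fun i _ => Nat.zero_le _) hKN
          have hFb := hbound F (hsub _ hF hFN)
          have hGb := hbound G (hsub _ hG hGN)
          omega
    · by_cases hFGN : N ∈ F ∨ N ∈ G
      · exfalso
        have hKb := hbound K (hsub _ hK hKN)
        rcases hFGN with h'|h'
        · have : x N ≤ ∑ i ∈ F, x i := Finset.single_le_sum (fun i _ => Nat.zero_le _) h'
          omega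
        · have : x N ≤ ∑ i ∈ G, x i := Finset.single_le_sum (fun i _ => Nat.zero_le _) h'
          omega
      · push_neg at hFGN
        exact ih F G K (hsub _ hF hFGN.1) (hsub _ hG hFGN.2) (hsub _ hK hKN) h

lemma key_lemma' (x : ℕ → ℕ) (hx : SufficientGrowth x) (F G K : Finset ℕ)
    (h : (∑ i ∈ F, x i) + ∑ i ∈ G, x i = ∑ i ∈ K, x i) : K = F ∪ G ∧ Disjoint F G := by
  classical
  obtain ⟨N, hN⟩ : ∃ N, F ⊆ Finset.range N ∧ G ⊆ Finset.range N ∧ K ⊆ Finset.range N := by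
    refine ⟨(F ∪ G ∪ K).sup id + 1, ?_, ?_, ?_⟩ <;>
      intro a ha <;> simp only [Finset.mem_range] <;>
      have := Finset.le_sup (f := id) (by simp [ha] : a ∈ F ∪ G ∪ K) <;>
      simp only [id] at this <;> omega
  exact key_lemma x hx _ F G K hN.1 hN.2.1 hN.2.2 h

/-- some Lcl r belongs to a strongly summable ultrafilter -/
lemma exists_Lcl_mem (p : Ultrafilter ℕ) (hp : StronglySummable p) : ∃ r, Lcl r ∈ p := by
  have hpos : {n : ℕ | 0 < n} ∈ p := by
    by_contra h
    have h0 : {n : ℕ | 0 < n}ᶜ ∈ p := Ultrafilter.compl_mem_iff_notMem.mpr h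
    obtain ⟨x, hx1, hx2, _⟩ := hp _ h0
    have hm := hx2 (mem_FS_single x 0)
    simp only [Set.mem_compl_iff, Set.mem_setOf_eq, not_lt, Nat.le_zero] at hm
    exact absurd hm (hx1 0).ne'
  by_contra h
  push_neg at h
  have hc : ∀ r, (Lcl r)ᶜ ∈ p := fun r => Ultrafilter.compl_mem_iff_notMem.mpr (h r)
  have hall : {n : ℕ | 0 < n} ∩ ((Lcl 0)ᶜ ∩ ((Lcl 1)ᶜ ∩ ((Lcl 2)ᶜ ∩ ((Lcl 3)ᶜ ∩ (Lcl 4)ᶜ)))) ∈ p :=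
    Filter.inter_mem hpos (Filter.inter_mem (hc 0) (Filter.inter_mem (hc 1) (Filter.inter_mem (hc 2)
      (Filter.inter_mem (hc 3) (hc 4)))))
  obtain ⟨n, hn0, h0', h1', h2', h3', h4'⟩ := Ultrafilter.nonempty_of_mem hall
  simp only [Set.mem_compl_iff, Lcl, Set.mem_setOf_eq, not_and] at h0' h1' h2' h3' h4'
  simp only [Set.mem_setOf_eq] at hn0
  have := h0' hn0; have := h1' hn0; have := h2' hn0; have := h3' hn0; have := h4' hn0
  omega

/-- sorting: from FS ⊆ Lcl r get a bijection making it sufficiently growing -/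
lemma sort_lemma (w : ℕ → ℕ) (r : ℕ) (h1 : ∀ n, 0 < w n)
    (h3 : ∀ n, w n ∈ Lcl r) (h2 : ∀ i j, i ≠ j → w i + w j ∈ Lcl r) :
    ∃ τ : ℕ → ℕ, Function.Bijective τ ∧ SufficientGrowth (w ∘ τ) := by
  classical
  have hlog : ∀ n, 2 ^ Nat.log 2 (w n) ≤ w n := fun n => Nat.pow_log_le_self 2 (h1 n).ne'
  have hlog' : ∀ n, w n < 2 ^ (Nat.log 2 (w n) + 1) :=
    fun n => Nat.lt_pow_succ_log_self one_lt_two _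
  have hne : ∀ i j, i ≠ j → Nat.log 2 (w i) ≠ Nat.log 2 (w j) := by
    intro i j hij heq
    set c := Nat.log 2 (w j) with hc
    have hi1 := hlog i; have hi2 := hlog' i
    have hj1 : 2 ^ c ≤ w j := hlog j
    have hj2 : w j < 2 ^ (c + 1) := hlog' j
    rw [heq] at hi1 hi2
    have e1 : (2:ℕ) ^ (c + 1) = 2 ^ c * 2 := pow_succ 2 c
    have e2 : (2:ℕ) ^ (c + 2) = 2 ^ c * 4 := by ring
    have hsum1 : 2 ^ (c + 1) ≤ w i + w j := by omega
    have hsum2 : w i + w j < 2 ^ ((c + 1) + 1) := by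
      have : (2:ℕ) ^ ((c+1)+1) = 2 ^ c * 4 := by ring
      omega
    have hlsum : Nat.log 2 (w i + w j) = c + 1 := Nat.log_eq_of_pow_le_of_lt_pow hsum1 hsum2
    have hm1 := (h2 i j hij).2
    have hm2 := (h3 j).2
    rw [hlsum] at hm1
    rw [← hc] at hm2
    omega
  have hwinj : Function.Injective w := by
    intro i j hij
    by_contra hne'
    exact hne i j hne' (by rw [hij])
  have hinf : {n | n ∈ Set.range w}.Infinite := by
    exact Set.infinite_range_of_injective hwinj
  set P : ℕ → Prop := fun n => n ∈ Set.range w with hP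
  have hmem : ∀ n, P (Nat.nth P n) := fun n => Nat.nth_mem_of_infinite hinf n
  have τdef : ∀ n, ∃ i, w i = Nat.nth P n := fun n => hmem n
  choose τ hτ using τdef
  have hmono : StrictMono (Nat.nth P) := Nat.nth_strictMono hinf
  have hτinj : Function.Injective τ := by
    intro a b hab
    exact hmono.injective (by rw [← hτ a, ← hτ b, hab])
  have hτsurj : Function.Surjective τ := by
    intro i
    have : w i ∈ Set.range (Nat.nth P) := by
      rw [Nat.range_nth_of_infinite hinf]
      exact Set.mem_range_self i
    obtain ⟨n, hn⟩ := this
    exact ⟨n, hwinj (by rw [hτ n, hn])⟩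
  refine ⟨τ, ⟨hτinj, hτsurj⟩, ?_⟩
  set c : ℕ → ℕ := fun n => Nat.log 2 (w (τ n)) with hcdef
  have hcmono : ∀ n, c n + 5 ≤ c (n + 1) := by
    intro n
    have hlt : w (τ n) < w (τ (n + 1)) := by
      rw [hτ n, hτ (n + 1)]
      exact hmono (Nat.lt_succ_self n)
    have hle : c n ≤ c (n + 1) := Nat.log_mono_right hlt.le
    have hne' : c n ≠ c (n + 1) := hne _ _ (fun h => by simp [h] at hlt)
    have hm1 := (h3 (τ n)).2
    have hm2 := (h3 (τ (n + 1))).2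
    simp only [hcdef] at hle hne' ⊢
    omega
  have hgrow : ∀ n, 4 * ∑ i ∈ Finset.range n, w (τ i) < 2 ^ c n := by
    intro n
    induction n with
    | zero => simpa using pow_pos (by norm_num : (0:ℕ) < 2) (c 0)
    | succ n ih =>
      rw [Finset.sum_range_succ]
      have h1' : w (τ n) < 2 ^ (c n + 1) := hlog' (τ n)
      have e1 : (2:ℕ) ^ (c n + 1) = 2 ^ c n * 2 := pow_succ 2 (c n)
      have e5 : (2:ℕ) ^ (c n + 5) = 2 ^ c n * 32 := by ring
      have hstep : 2 ^ (c n + 5) ≤ 2 ^ c (n + 1) :=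
        Nat.pow_le_pow_right (by norm_num) (hcmono n)
      omega
  intro n
  have ha := hgrow n
  have hb : 2 ^ c n ≤ w (τ n) := hlog (τ n)
  simp only [Function.comp]
  omega

lemma FS_comp_bijective (w τ : ℕ → ℕ) (hτ : Function.Bijective τ) : FS (w ∘ τ) = FS w := by
  classical
  ext n
  constructor
  · rintro ⟨F, hF, rfl⟩
    refine ⟨F.image τ, hF.image τ, ?_⟩
    rw [Finset.sum_image (fun a _ b _ h => hτ.1 h)]
    rfl
  · rintro ⟨G, hG, rfl⟩
    set σ := Equiv.ofBijective τ hτ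
    refine ⟨G.image σ.symm, hG.image _, ?_⟩
    rw [Finset.sum_image (fun a _ b _ h => σ.symm.injective h)]
    refine Finset.sum_congr rfl fun i _ => ?_
    simp [σ, Function.comp]
    exact congrArg w (σ.apply_symm_apply i)

lemma bsupp_sum_two_pow_subset (H : Finset ℕ) : bsupp (∑ i ∈ H, 2 ^ i) ⊆ ↑H := by
  classical
  intro j hj
  by_contra hjH
  simp only [Finset.mem_coe] at hjH
  have hj' : ((∑ i ∈ H, 2 ^ i) / 2 ^ j) % 2 = 1 := hj
  have hsplit : ∑ i ∈ H, 2 ^ i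
      = (∑ i ∈ H.filter (fun i => i < j), 2 ^ i) + ∑ i ∈ H.filter (fun i => ¬ i < j), 2 ^ i :=
    (Finset.sum_filter_add_sum_filter_not H _ _).symm
  have hhi : H.filter (fun i => ¬ i < j) = H.filter (fun i => j < i) := by
    ext i
    simp only [Finset.mem_filter]
    constructor
    · rintro ⟨hiH, hnlt⟩
      have : i ≠ j := fun h => hjH (h ▸ hiH)
      exact ⟨hiH, by omega⟩
    · rintro ⟨hiH, hlt⟩
      exact ⟨hiH, by omega⟩
  have hfac : ∑ i ∈ H.filter (fun i => j < i), 2 ^ i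
      = 2 ^ (j + 1) * ∑ i ∈ H.filter (fun i => j < i), 2 ^ (i - (j + 1)) := by
    rw [Finset.mul_sum]
    apply Finset.sum_congr rfl
    intro i hi
    rw [Finset.mem_filter] at hi
    rw [← pow_add]
    congr 1
    omega
  have hg : ∀ m : ℕ, (∑ i ∈ Finset.range m, 2 ^ i) + 1 = 2 ^ m := by
    intro m
    induction m with
    | zero => simp
    | succ m ih => rw [Finset.sum_range_succ, pow_succ]; omega
  have hlow : ∑ i ∈ H.filter (fun i => i < j), 2 ^ i < 2 ^ j := by
    have hle : ∑ i ∈ H.filter (fun i => i < j), 2 ^ i ≤ ∑ i ∈ Finset.range j, 2 ^ i :=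
      Finset.sum_le_sum_of_subset (fun i hi => by
        rw [Finset.mem_filter] at hi; exact Finset.mem_range.mpr hi.2)
    have := hg j
    omega
  set A := ∑ i ∈ H.filter (fun i => i < j), 2 ^ i with hA
  set C := ∑ i ∈ H.filter (fun i => j < i), 2 ^ (i - (j + 1)) with hC
  have hn : ∑ i ∈ H, 2 ^ i = A + 2 ^ j * (2 * C) := by
    rw [hsplit, hhi, hfac, pow_succ]
    ring
  rw [hn, Nat.add_mul_div_left _ _ (pow_pos (by norm_num : (0:ℕ) < 2) j),
    Nat.div_eq_of_lt hlow] at hj'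
  omega

/-- the main construction -/
lemma constr (p : Ultrafilter ℕ) (hp : StronglySummable p) (x : ℕ → ℕ)
    (hx : SufficientGrowth x) (hxp : FS x ∈ p) (φ : ℕ → ℕ)
    (hφ : ∀ F : Finset ℕ, F.Nonempty → φ (∑ i ∈ F, x i) = ∑ i ∈ F, 2 ^ i)
    (A : Set ℕ) (hA : A ∈ p.map φ) :
    ∃ z : ℕ → ℕ, (∀ n, 0 < z n) ∧ FS z ⊆ A ∧ FS z ∈ p.map φ ∧ DisjointBinarySupport z := by
  classical
  have hA' : φ ⁻¹' A ∈ p := Ultrafilter.mem_map.mp hA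
  have hB : φ ⁻¹' A ∩ FS x ∈ p := Filter.inter_mem hA' hxp
  obtain ⟨y, hy1, hy2, hy3⟩ := hp _ hB
  have hyFS : ∀ n, y n ∈ FS x := fun n => (hy2 (mem_FS_single y n)).2
  choose H hHne hHsum using hyFS
  have hbi : ∀ G : Finset ℕ, G.Nonempty → ∑ n ∈ G, y n = ∑ i ∈ G.biUnion H, x i := by
    intro G
    induction G using Finset.induction_on with
    | empty => rintro ⟨a, ha⟩; simp at ha
    | @insert m G hmG ih =>
      intro _
      rcases G.eq_empty_or_nonempty with rfl | hGne
      · simp [← hHsum m]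
      · have hsum : ∑ n ∈ insert m G, y n = y m + ∑ n ∈ G, y n := Finset.sum_insert hmG
        have hmem : (∑ n ∈ insert m G, y n) ∈ FS x :=
          (hy2 ⟨insert m G, ⟨m, Finset.mem_insert_self m G⟩, rfl⟩).2
        obtain ⟨K, hKne, hKsum⟩ := hmem
        have heq : (∑ i ∈ H m, x i) + ∑ i ∈ G.biUnion H, x i = ∑ i ∈ K, x i := by
          rw [hHsum m, ← ih hGne, ← hsum, hKsum]
        obtain ⟨hK, _⟩ := key_lemma' x hx _ _ _ heq
        calc ∑ n ∈ insert m G, y n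
            = (∑ i ∈ H m, x i) + ∑ i ∈ G.biUnion H, x i := by
              rw [hsum, hHsum m, ← ih hGne]
          _ = ∑ i ∈ K, x i := heq
          _ = ∑ i ∈ (insert m G).biUnion H, x i := by rw [hK, Finset.biUnion_insert]
  have hdisj : ∀ i j, i ≠ j → Disjoint (H i) (H j) := by
    intro i j hij
    obtain ⟨K, _, hKsum⟩ := (hy2 (mem_FS_pair y hij)).2
    have heq : (∑ a ∈ H i, x a) + ∑ a ∈ H j, x a = ∑ a ∈ K, x a := by
      rw [hHsum i, hHsum j, hKsum]
    exact (key_lemma' x hx _ _ _ heq).2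
  set z : ℕ → ℕ := fun n => ∑ i ∈ H n, 2 ^ i with hzdef
  have hzsum : ∀ G : Finset ℕ, ∑ n ∈ G, z n = ∑ i ∈ G.biUnion H, 2 ^ i := by
    intro G
    rw [Finset.sum_biUnion (fun i _ j _ hij => hdisj i j hij)]
  have hbine : ∀ G : Finset ℕ, G.Nonempty → (G.biUnion H).Nonempty := by
    rintro G ⟨g, hg⟩
    obtain ⟨a, ha⟩ := hHne g
    exact ⟨a, Finset.mem_biUnion.mpr ⟨g, hg, ha⟩⟩
  have hφz : ∀ G : Finset ℕ, G.Nonempty → φ (∑ n ∈ G, y n) = ∑ n ∈ G, z n := by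
    intro G hG
    rw [hbi G hG, hφ _ (hbine G hG), hzsum G]
  refine ⟨z, ?_, ?_, ?_, ?_⟩
  · intro n
    exact Finset.sum_pos (fun i _ => pow_pos (by norm_num : (0:ℕ) < 2) i) (hHne n)
  · rintro u ⟨G, hG, rfl⟩
    rw [← hφz G hG]
    exact (hy2 ⟨G, hG, rfl⟩).1
  · rw [Ultrafilter.mem_map]
    refine Filter.mem_of_superset hy3 ?_
    rintro u ⟨G, hG, rfl⟩
    exact ⟨G, hG, (hφz G hG).symm⟩
  · intro i j hij
    refine Set.disjoint_of_subset (bsupp_sum_two_pow_subset (H i))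
      (bsupp_sum_two_pow_subset (H j)) ?_
    exact Finset.disjoint_coe.mpr (hdisj i j hij)

/-- Every strongly summable ultrafilter is additively isomorphic to one with disjoint
binary support. -/
theorem stronglySummable_add_iso_disjoint_bsupp (p : Ultrafilter ℕ)
    (hp : StronglySummable p) :
    ∃ x : ℕ → ℕ, SufficientGrowth x ∧ FS x ∈ p ∧
      ∀ φ : ℕ → ℕ,
        (∀ F : Finset ℕ, F.Nonempty → φ (∑ i ∈ F, x i) = ∑ i ∈ F, 2 ^ i) →
        StronglySummable (p.map φ) ∧ HasDisjointBinarySupport (p.map φ) := by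
  classical
  obtain ⟨r, hr⟩ := exists_Lcl_mem p hp
  obtain ⟨w, hwpos, hwFS, hwmem⟩ := hp (Lcl r) hr
  obtain ⟨τ, hτ, hgrow⟩ := sort_lemma w r hwpos (fun n => hwFS (mem_FS_single w n))
    (fun i j hij => hwFS (mem_FS_pair w hij))
  set x := w ∘ τ with hxdef
  have hFSx : FS x = FS w := FS_comp_bijective w τ hτ
  refine ⟨x, hgrow, hFSx ▸ hwmem, fun φ hφ => ?_⟩
  have hxmem : FS x ∈ p := hFSx ▸ hwmem
  have hSS : StronglySummable (p.map φ) := fun A hA => by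
    obtain ⟨z, h1, h2, h3, _⟩ := constr p hp x hgrow hxmem φ hφ A hA
    exact ⟨z, h1, h2, h3⟩
  refine ⟨hSS, ?_⟩
  obtain ⟨r', hr'⟩ := exists_Lcl_mem (p.map φ) hSS
  obtain ⟨z, hz1, hz2, hz3, hz4⟩ := constr p hp x hgrow hxmem φ hφ (Lcl r') hr'
  obtain ⟨τ', hτ', hgrow'⟩ := sort_lemma z r' hz1 (fun n => hz2 (mem_FS_single z n))
    (fun i j hij => hz2 (mem_FS_pair z hij))
  refine ⟨z ∘ τ', fun n => hz1 _, hgrow', fun i j hij => hz4 _ _ fun h => hij (hτ'.1 h), ?_⟩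
  rw [FS_comp_bijective z τ' hτ']
  exact hz3
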